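/- Let m ≥ 1, d ≥ 1. The number of pairs (s,p) with s ∈ {0,1,...,2^m - 1}^d, p ∈ M_m^d for which Ω_m(s,p) is nonempty is at most exp(m·2^m · log(2^{m+3} d)). -/

import Mathlib

def OmegaNonempty (m d : ℕ) (s : Fin d → ℕ) (p : Fin d → ℝ) : Prop :=
  ∃ a b : Fin d → ℝ,
    (∀ ℓ, 0 ≤ a ℓ ∧ a ℓ ≤ b ℓ ∧ b ℓ ≤ 1) ∧
    ((2 : ℝ) ^ m)⁻¹ < ∏ ℓ, (b ℓ - a ℓ) ∧
    ∀ ℓ, (s ℓ : ℝ) / 2 ^ m < b ℓ - a ℓ ∧ b ℓ - a ℓ ≤ ((s ℓ : ℝ) + 1) / 2 ^ m ∧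
      p ℓ - ((2 : ℝ) ^ m)⁻¹ ≤ a ℓ ∧ a ℓ < p ℓ

lemma key_support (m d : ℕ) (hm : 1 ≤ m) (s q : Fin d → Fin (2 ^ m))
    (hq : ∀ ℓ, 1 ≤ (q ℓ : ℕ))
    (h : OmegaNonempty m d (fun ℓ => (s ℓ : ℕ)) (fun ℓ => ((q ℓ : ℕ) : ℝ) / 2 ^ m)) :
    (Finset.univ.filter fun ℓ => ¬((s ℓ : ℕ) = 2 ^ m - 1 ∧ (q ℓ : ℕ) = 1)).card
      ≤ m * 2 ^ m - 1 := by
  classical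
  obtain ⟨a, b, hab, hvol, hsp⟩ := h
  set ε : ℝ := ((2 : ℝ) ^ m)⁻¹ with hε
  have hεpos : 0 < ε := by positivity
  have h2m1 : (1:ℝ) ≤ 2 ^ m := one_le_pow₀ (by norm_num)
  have hε1 : ε ≤ 1 := by
    rw [hε]; exact inv_le_one_of_one_le₀ h2m1
  set T := Finset.univ.filter fun ℓ => ¬((s ℓ : ℕ) = 2 ^ m - 1 ∧ (q ℓ : ℕ) = 1) with hT
  have hfac0 : ∀ ℓ, 0 ≤ b ℓ - a ℓ := by
    intro ℓ
    have := (hsp ℓ).1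
    have h0 : (0:ℝ) ≤ ((s ℓ : ℕ) : ℝ) / 2 ^ m := by positivity
    linarith
  have hfac1 : ∀ ℓ, b ℓ - a ℓ ≤ 1 := by
    intro ℓ
    have := (hab ℓ)
    linarith [this.1, this.2.2]
  have hTb : ∀ ℓ ∈ T, b ℓ - a ℓ ≤ 1 - ε := by
    intro ℓ hℓ
    rw [hT, Finset.mem_filter] at hℓ
    have hℓ' := hℓ.2
    by_cases hs : (s ℓ : ℕ) = 2 ^ m - 1
    · have hq2 : 2 ≤ (q ℓ : ℕ) := by
        have h1 := hq ℓ
        have : ¬ (q ℓ : ℕ) = 1 := fun hc => hℓ' ⟨hs, hc⟩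
        omega
      have hpa := (hsp ℓ).2.2.1
      have hqcast : (2:ℝ) ≤ ((q ℓ : ℕ) : ℝ) := by exact_mod_cast hq2
      have h2mpos : (0:ℝ) < 2 ^ m := by positivity
      have hεa : ε ≤ a ℓ := by
        have : (2:ℝ) / 2 ^ m ≤ ((q ℓ : ℕ) : ℝ) / 2 ^ m := by gcongr
        have h2e : (2:ℝ) / 2 ^ m = 2 * ε := by rw [hε]; ring
        linarith
      have hb1 := (hab ℓ).2.2
      linarith
    · have hs' : (s ℓ : ℕ) + 1 ≤ 2 ^ m - 1 := by
        have := (s ℓ).isLt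
        omega
      have hcast : ((s ℓ : ℕ) : ℝ) + 1 ≤ (2:ℝ) ^ m - 1 := by
        have : (((s ℓ : ℕ) + 1 : ℕ) : ℝ) ≤ ((2 ^ m - 1 : ℕ) : ℝ) := by exact_mod_cast hs'
        push_cast [Nat.cast_sub (Nat.one_le_two_pow)] at this
        linarith
      have hba := (hsp ℓ).2.1
      have h2mpos : (0:ℝ) < 2 ^ m := by positivity
      have hdiv : (((s ℓ : ℕ) : ℝ) + 1) / 2 ^ m ≤ ((2:ℝ) ^ m - 1) / 2 ^ m := by gcongr
      have heq : ((2:ℝ) ^ m - 1) / 2 ^ m = 1 - ε := by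
        rw [hε]; field_simp
      linarith
  -- now the product chain
  have hchain : ε < (1 - ε) ^ T.card := by
    have h1 : ∏ ℓ, (b ℓ - a ℓ) ≤ ∏ ℓ ∈ T, (b ℓ - a ℓ) := by
      have hsplit : (∏ ℓ ∈ T, (b ℓ - a ℓ)) * (∏ ℓ ∈ Tᶜ, (b ℓ - a ℓ)) = ∏ ℓ, (b ℓ - a ℓ) :=
        Finset.prod_mul_prod_compl T _
      have hc1 : (∏ ℓ ∈ Tᶜ, (b ℓ - a ℓ)) ≤ 1 :=
        Finset.prod_le_one (fun ℓ _ => hfac0 ℓ) (fun ℓ _ => hfac1 ℓ)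
      have hc0 : (0:ℝ) ≤ ∏ ℓ ∈ T, (b ℓ - a ℓ) :=
        Finset.prod_nonneg (fun ℓ _ => hfac0 ℓ)
      nlinarith
    have h2 : ∏ ℓ ∈ T, (b ℓ - a ℓ) ≤ ∏ ℓ ∈ T, (1 - ε) :=
      Finset.prod_le_prod (fun ℓ _ => hfac0 ℓ) hTb
    rw [Finset.prod_const] at h2
    calc ε < ∏ ℓ, (b ℓ - a ℓ) := hvol
    _ ≤ ∏ ℓ ∈ T, (b ℓ - a ℓ) := h1
    _ ≤ (1 - ε) ^ T.card := h2
  by_contra hcard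
  have hcard' : m * 2 ^ m ≤ T.card := by
    have hk1 : 1 ≤ m * 2 ^ m := Nat.one_le_iff_ne_zero.2 (by positivity)
    omega
  have hexp : (1 - ε) ^ (2 ^ m) ≤ 1 / 2 := by
    have he1 : 1 - ε ≤ Real.exp (-ε) := by
      have := Real.add_one_le_exp (-ε)
      linarith
    have he2 : (1 - ε) ^ (2 ^ m) ≤ Real.exp (-ε) ^ (2 ^ m) :=
      pow_le_pow_left₀ (by linarith) he1 _
    have he3 : Real.exp (-ε) ^ (2 ^ m) = Real.exp (-1) := by
      rw [← Real.exp_nat_mul]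
      congr 1
      rw [hε]
      have : ((2:ℝ) ^ m) ≠ 0 := by positivity
      push_cast
      field_simp
    have he4 : Real.exp (-1) ≤ 1 / 2 := by
      have h2e : (2:ℝ) ≤ Real.exp 1 := by linarith [Real.exp_one_gt_d9]
      rw [Real.exp_neg, ← one_div]
      have := Real.exp_pos 1
      rw [div_le_div_iff₀ this (by norm_num)]
      linarith
    calc (1 - ε) ^ (2 ^ m) ≤ Real.exp (-ε) ^ (2 ^ m) := he2
    _ = Real.exp (-1) := he3
    _ ≤ 1 / 2 := he4
  have hkey : (1 - ε) ^ (m * 2 ^ m) ≤ ε := by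
    have : (1 - ε) ^ (m * 2 ^ m) = ((1 - ε) ^ (2 ^ m)) ^ m := by
      rw [← pow_mul, mul_comm]
    rw [this, hε]
    calc ((1 - ε) ^ (2 ^ m)) ^ m ≤ (1 / 2) ^ m := by
          apply pow_le_pow_left₀ (pow_nonneg (by linarith) _) hexp
    _ = ((2:ℝ) ^ m)⁻¹ := by
          rw [div_pow, one_pow, one_div]
  have hmono : (1 - ε) ^ T.card ≤ (1 - ε) ^ (m * 2 ^ m) :=
    pow_le_pow_of_le_one (by linarith) (by linarith) hcard'
  linarith


open Finset in
lemma fact_aux (j : ℕ) : ∀ n a : ℕ, j + n ≤ a → (j + n).factorial ≤ j.factorial * a ^ n := by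
  intro n
  induction n with
  | zero => simp [Nat.factorial]
  | succ n ih =>
    intro a h
    have h1 : j + n ≤ a := by omega
    calc (j + (n + 1)).factorial = (j + n + 1) * (j + n).factorial := by
          rw [show j + (n + 1) = (j + n) + 1 from rfl, Nat.factorial_succ]
    _ ≤ a * (j.factorial * a ^ n) := Nat.mul_le_mul (by omega) (ih a h1)
    _ = j.factorial * a ^ (n + 1) := by ring

-- count of functions with small support
lemma count_aux (d K : ℕ) (V : Type*) [Fintype V] [DecidableEq V] (v0 : V) :
    (Finset.univ.filter fun f : Fin d → V =>
        (Finset.univ.filter fun ℓ => f ℓ ≠ v0).card ≤ K).card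
      ≤ ∑ j ∈ Finset.range (K + 1), d.choose j * (Fintype.card V) ^ j := by
  classical
  set A := Finset.univ.filter fun f : Fin d → V =>
      (Finset.univ.filter fun ℓ => f ℓ ≠ v0).card ≤ K with hA
  have hsub : A ⊆ (Finset.range (K + 1)).biUnion fun j =>
      (Finset.powersetCard j (Finset.univ : Finset (Fin d))).biUnion fun T =>
        Fintype.piFinset fun ℓ => if ℓ ∈ T then Finset.univ else {v0} := by
    intro f hf
    rw [hA, Finset.mem_filter] at hf
    refine Finset.mem_biUnion.2 ⟨(Finset.univ.filter fun ℓ => f ℓ ≠ v0).card,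
      Finset.mem_range.2 (by omega), ?_⟩
    refine Finset.mem_biUnion.2 ⟨Finset.univ.filter fun ℓ => f ℓ ≠ v0,
      Finset.mem_powersetCard.2 ⟨Finset.subset_univ _, rfl⟩, ?_⟩
    rw [Fintype.mem_piFinset]
    intro ℓ
    by_cases hℓ : f ℓ = v0 <;> simp [hℓ]
  calc A.card ≤ _ := Finset.card_le_card hsub
  _ ≤ ∑ j ∈ Finset.range (K + 1),
        ((Finset.powersetCard j (Finset.univ : Finset (Fin d))).biUnion fun T =>
          Fintype.piFinset fun ℓ => if ℓ ∈ T then Finset.univ else {v0}).card :=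
      Finset.card_biUnion_le
  _ ≤ ∑ j ∈ Finset.range (K + 1), d.choose j * (Fintype.card V) ^ j := by
      apply Finset.sum_le_sum
      intro j _
      calc ((Finset.powersetCard j (Finset.univ : Finset (Fin d))).biUnion fun T =>
              Fintype.piFinset fun ℓ => if ℓ ∈ T then Finset.univ else {v0}).card
          ≤ ∑ T ∈ Finset.powersetCard j (Finset.univ : Finset (Fin d)),
              (Fintype.piFinset fun ℓ => if ℓ ∈ T then (Finset.univ : Finset V) else {v0}).card :=
            Finset.card_biUnion_le
      _ = ∑ T ∈ Finset.powersetCard j (Finset.univ : Finset (Fin d)), (Fintype.card V) ^ j := by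
            apply Finset.sum_congr rfl
            intro T hT
            have hTcard : T.card = j := (Finset.mem_powersetCard.1 hT).2
            rw [Fintype.card_piFinset]
            have : ∀ ℓ : Fin d, ((if ℓ ∈ T then (Finset.univ : Finset V) else {v0})).card
                = if ℓ ∈ T then Fintype.card V else 1 := by
              intro ℓ; split <;> simp
            rw [Finset.prod_congr rfl fun ℓ _ => this ℓ]
            rw [Finset.prod_ite_mem Finset.univ T fun _ => Fintype.card V]
            rw [Finset.univ_inter, Finset.prod_const, hTcard]
      _ = d.choose j * (Fintype.card V) ^ j := by
            rw [Finset.sum_const, Finset.card_powersetCard, Finset.card_univ,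
              Fintype.card_fin, smul_eq_mul]

lemma real_bound (m d : ℕ) (hm : 1 ≤ m) (hd : 1 ≤ d) :
    ((∑ j ∈ Finset.range (m * 2 ^ m - 1 + 1), d.choose j * (2 ^ m * 2 ^ m) ^ j : ℕ) : ℝ)
      ≤ Real.exp ((m : ℝ) * 2 ^ m * Real.log (2 ^ (m + 3) * (d : ℝ))) := by
  have hn2 : 2 ≤ 2 ^ m := by
    calc 2 = 2 ^ 1 := by norm_num
    _ ≤ 2 ^ m := Nat.pow_le_pow_right (by norm_num) hm
  set n : ℕ := 2 ^ m with hn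
  set k : ℕ := m * n with hk
  have hk2 : 2 ≤ k := le_trans hn2 (Nat.le_mul_of_pos_left n hm)
  set K : ℕ := k - 1 with hKdef
  have hK1 : 1 ≤ K := by omega
  have hkK : k = K + 1 := by omega
  set a : ℕ := d * (n * n) with ha
  have hmn : m ≤ n := le_of_lt (Nat.lt_two_pow_self (n := m))
  have hKa : K ≤ a := by
    have h1 : k ≤ n * n := Nat.mul_le_mul_right n hmn
    have h2 : n * n ≤ a := Nat.le_mul_of_pos_left _ hd
    omega
  set y : ℝ := 2 ^ (m + 3) * (d : ℝ) with hy
  have hy8 : y = 8 * (n : ℝ) * d := by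
    rw [hy, hn]
    push_cast
    ring
  have hdpos : (0:ℝ) < d := by exact_mod_cast hd
  have hypos : (0:ℝ) < y := by rw [hy8]; positivity
  have hKpos : (0:ℝ) < (K:ℝ) := by exact_mod_cast hK1
  -- Step 1: termwise bound
  have step1 : ((∑ j ∈ Finset.range (K + 1), d.choose j * (n * n) ^ j : ℕ) : ℝ)
      ≤ (K + 1) * ((a : ℝ) ^ K / (K.factorial : ℝ)) := by
    push_cast
    calc ∑ j ∈ Finset.range (K + 1), (d.choose j : ℝ) * ((n:ℝ) * n) ^ j
        ≤ ∑ j ∈ Finset.range (K + 1), (a : ℝ) ^ K / (K.factorial : ℝ) := by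
          apply Finset.sum_le_sum
          intro j hj
          have hjK : j ≤ K := by
            have := Finset.mem_range.1 hj; omega
          have c1 : (d.choose j : ℝ) ≤ (d : ℝ) ^ j / (j.factorial : ℝ) :=
            Nat.choose_le_pow_div j d
          have c2 : (d.choose j : ℝ) * ((n:ℝ) * n) ^ j ≤ (a : ℝ) ^ j / (j.factorial : ℝ) := by
            have hnn : (0:ℝ) ≤ ((n:ℝ) * n) ^ j := by positivity
            calc (d.choose j : ℝ) * ((n:ℝ) * n) ^ j
                ≤ ((d : ℝ) ^ j / (j.factorial : ℝ)) * ((n:ℝ) * n) ^ j := by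
                  exact mul_le_mul_of_nonneg_right c1 hnn
            _ = (a : ℝ) ^ j / (j.factorial : ℝ) := by
                  rw [ha]; push_cast; rw [mul_pow]; ring
          refine c2.trans ?_
          -- (a)^j/j! ≤ a^K/K!
          rw [div_le_div_iff₀ (by positivity) (by positivity)]
          have hnat : a ^ j * K.factorial ≤ a ^ K * j.factorial := by
            have hfa : K.factorial ≤ j.factorial * a ^ (K - j) := by
              have := fact_aux j (K - j) a (by omega)
              rwa [show j + (K - j) = K by omega] at this
            calc a ^ j * K.factorial ≤ a ^ j * (j.factorial * a ^ (K - j)) :=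
                  Nat.mul_le_mul_left _ hfa
            _ = a ^ K * j.factorial := by
                  rw [← mul_assoc, mul_comm (a ^ j) j.factorial, mul_assoc, ← pow_add,
                    show j + (K - j) = K by omega]
                  ring
          exact_mod_cast hnat
    _ = (K + 1) * ((a : ℝ) ^ K / (K.factorial : ℝ)) := by
          rw [Finset.sum_const, Finset.card_range]
          push_cast
          ring
  -- Step 2: a^K/K! ≤ (e*a/K)^K
  have hKK : (K : ℝ) ^ K ≤ Real.exp 1 ^ K * (K.factorial : ℝ) := by
    have hsum : ((K:ℝ)) ^ K / (K.factorial : ℝ) ≤ Real.exp K := by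
      refine le_trans ?_ (Real.sum_le_exp_of_nonneg (by positivity) (K + 1))
      exact Finset.single_le_sum (f := fun i => (K:ℝ) ^ i / (i.factorial : ℝ))
        (fun i _ => by positivity) (Finset.self_mem_range_succ K)
    have hexpK : Real.exp (K : ℝ) = Real.exp 1 ^ K := by
      rw [← Real.exp_nat_mul, mul_one]
    rw [div_le_iff₀ (by positivity)] at hsum
    rw [← hexpK]
    linarith
  have step2 : (a : ℝ) ^ K / (K.factorial : ℝ) ≤ (Real.exp 1 * a / K) ^ K := by
    rw [div_pow, div_le_div_iff₀ (by positivity) (by positivity)]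
    calc (a : ℝ) ^ K * (K : ℝ) ^ K ≤ (a : ℝ) ^ K * (Real.exp 1 ^ K * (K.factorial : ℝ)) := by
          exact mul_le_mul_of_nonneg_left hKK (by positivity)
    _ = (Real.exp 1 * a) ^ K * (K.factorial : ℝ) := by rw [mul_pow]; ring
  -- Step 3
  have he3 : Real.exp 1 ≤ 3 := by linarith [Real.exp_one_lt_d9]
  have hmpos : (0:ℝ) < (m:ℝ) := by exact_mod_cast hm
  have hc : Real.exp 1 * a / K ≤ 3 / (4 * m) * y := by
    rw [div_le_iff₀ hKpos]
    have h2K : (m : ℝ) * n ≤ 2 * K := by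
      have : k ≤ 2 * K := by omega
      have := (Nat.cast_le (α := ℝ)).2 this
      push_cast at this
      rw [hk] at this
      push_cast at this
      linarith
    have hapos : (0:ℝ) ≤ (a:ℝ) := by positivity
    have heq : 3 / (4 * (m:ℝ)) * y * ((m * n) / 2) = 3 * (a : ℝ) := by
      rw [hy8, ha]
      push_cast
      field_simp
      ring
    have h1 : Real.exp 1 * a ≤ 3 * (a : ℝ) := mul_le_mul_of_nonneg_right he3 hapos
    have h2 : 3 / (4 * (m:ℝ)) * y * ((m * n) / 2) ≤ 3 / (4 * m) * y * K := by
      apply mul_le_mul_of_nonneg_left (by linarith) (by positivity)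
    linarith
  have hcpos : (0:ℝ) ≤ Real.exp 1 * a / K := by positivity
  have step3 : (K + 1 : ℝ) * (Real.exp 1 * a / K) ^ K ≤ y ^ (K + 1) := by
    have hKc : ((K:ℝ) + 1) = (m : ℝ) * n := by
      have : ((k:ℕ):ℝ) = (m:ℝ) * n := by rw [hk]; push_cast; ring
      rw [← this]
      exact_mod_cast congrArg (Nat.cast (R := ℝ)) hkK.symm
    have hb1 : (Real.exp 1 * a / K) ^ K ≤ (3 / (4 * m) * y) ^ K :=
      pow_le_pow_left₀ hcpos hc K
    have hsplit : (3 / (4 * (m:ℝ)) * y) ^ K = (3/4 : ℝ) ^ K * ((1:ℝ)/m) ^ K * y ^ K := by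
      rw [← mul_pow, ← mul_pow]
      congr 1
      field_simp
    have h34 : ((3:ℝ)/4) ^ K ≤ 1 := pow_le_one₀ (by norm_num) (by norm_num)
    have h1m : ((1:ℝ)/m) ^ K ≤ 1/m := by
      calc ((1:ℝ)/m) ^ K ≤ ((1:ℝ)/m) ^ 1 :=
            pow_le_pow_of_le_one (by positivity) (by rw [div_le_one hmpos]; exact_mod_cast hm) hK1
      _ = 1/m := pow_one _
    have hyK : (0:ℝ) ≤ y ^ K := by positivity
    calc (K + 1 : ℝ) * (Real.exp 1 * a / K) ^ K
        ≤ (K + 1 : ℝ) * ((3/4 : ℝ) ^ K * ((1:ℝ)/m) ^ K * y ^ K) := by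
          rw [← hsplit]
          exact mul_le_mul_of_nonneg_left hb1 (by positivity)
    _ ≤ ((m:ℝ) * n) * (1 * (1/m) * y ^ K) := by
          rw [hKc]
          apply mul_le_mul_of_nonneg_left _ (by positivity)
          apply mul_le_mul_of_nonneg_right _ hyK
          exact mul_le_mul h34 h1m (by positivity) (by norm_num)
    _ = (n:ℝ) * y ^ K := by field_simp
    _ ≤ y * y ^ K := by
          apply mul_le_mul_of_nonneg_right _ hyK
          rw [hy8]
          have hn0 : (0:ℝ) < (n:ℝ) := by exact_mod_cast lt_of_lt_of_le (by norm_num) hn2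
          have hd1 : (1:ℝ) ≤ (d:ℝ) := by exact_mod_cast hd
          nlinarith
    _ = y ^ (K + 1) := by rw [pow_succ]; ring
  -- assemble
  have hexpy : Real.exp ((m : ℝ) * 2 ^ m * Real.log y) = y ^ k := by
    have hcast : (m : ℝ) * 2 ^ m = (k : ℝ) := by rw [hk, hn]; push_cast; ring
    rw [hcast, Real.exp_nat_mul, Real.exp_log hypos]
  calc ((∑ j ∈ Finset.range (K + 1), d.choose j * (n * n) ^ j : ℕ) : ℝ)
      ≤ (K + 1) * ((a : ℝ) ^ K / (K.factorial : ℝ)) := step1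
  _ ≤ (K + 1) * (Real.exp 1 * a / K) ^ K := by
        exact mul_le_mul_of_nonneg_left step2 (by positivity)
  _ ≤ y ^ (K + 1) := step3
  _ = y ^ k := by rw [hkK]
  _ = Real.exp ((m : ℝ) * 2 ^ m * Real.log y) := hexpy.symm


/-- The number of pairs `(s,p)`, `s ∈ {0,…,2^m-1}^d`, `p ∈ M_m^d` (encoded by
`q ∈ {1,…,2^m-1}^d`, `p = q/2^m`), with `Ω_m(s,p) ≠ ∅` is at most
`exp(m·2^m·log(2^{m+3}·d))`. -/
theorem stmt_14 (m d : ℕ) (hm : 1 ≤ m) (hd : 1 ≤ d) :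
    (Set.ncard {sq : (Fin d → Fin (2 ^ m)) × (Fin d → Fin (2 ^ m)) |
        (∀ ℓ, 1 ≤ (sq.2 ℓ : ℕ)) ∧
        OmegaNonempty m d (fun ℓ => (sq.1 ℓ : ℕ))
          (fun ℓ => ((sq.2 ℓ : ℕ) : ℝ) / 2 ^ m)} : ℝ) ≤
      Real.exp ((m : ℝ) * 2 ^ m * Real.log (2 ^ (m + 3) * (d : ℝ))) := by
  classical
  have hn2 : 2 ≤ 2 ^ m := by
    calc 2 = 2 ^ 1 := by norm_num
    _ ≤ 2 ^ m := Nat.pow_le_pow_right (by norm_num) hm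
  set S : Set ((Fin d → Fin (2 ^ m)) × (Fin d → Fin (2 ^ m))) :=
    {sq | (∀ ℓ, 1 ≤ (sq.2 ℓ : ℕ)) ∧
        OmegaNonempty m d (fun ℓ => (sq.1 ℓ : ℕ))
          (fun ℓ => ((sq.2 ℓ : ℕ) : ℝ) / 2 ^ m)} with hS
  set def0 : Fin (2 ^ m) × Fin (2 ^ m) := (⟨2 ^ m - 1, by omega⟩, ⟨1, by omega⟩) with hdef0
  set φ : (Fin d → Fin (2 ^ m)) × (Fin d → Fin (2 ^ m)) → (Fin d → Fin (2 ^ m) × Fin (2 ^ m)) :=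
    fun sq ℓ => (sq.1 ℓ, sq.2 ℓ) with hφdef
  have hφ : Function.Injective φ := by
    intro x y hxy
    have h1 : ∀ ℓ, (x.1 ℓ, x.2 ℓ) = (y.1 ℓ, y.2 ℓ) := fun ℓ => congrFun hxy ℓ
    have hx1 : x.1 = y.1 := funext fun ℓ => congrArg Prod.fst (h1 ℓ)
    have hx2 : x.2 = y.2 := funext fun ℓ => congrArg Prod.snd (h1 ℓ)
    exact Prod.ext hx1 hx2
  set A : Finset (Fin d → Fin (2 ^ m) × Fin (2 ^ m)) :=
    Finset.univ.filter fun f =>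
      (Finset.univ.filter fun ℓ => f ℓ ≠ def0).card ≤ m * 2 ^ m - 1 with hA
  have him : φ '' S ⊆ ↑A := by
    rintro f ⟨sq, hsq, rfl⟩
    rw [hS, Set.mem_setOf_eq] at hsq
    have hks := key_support m d hm sq.1 sq.2 hsq.1 hsq.2
    simp only [hA, Finset.coe_filter, Set.mem_setOf_eq, Finset.mem_univ, true_and]
    have hfeq : (Finset.univ.filter fun ℓ => φ sq ℓ ≠ def0)
        = Finset.univ.filter fun ℓ => ¬((sq.1 ℓ : ℕ) = 2 ^ m - 1 ∧ (sq.2 ℓ : ℕ) = 1) := by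
      apply Finset.filter_congr
      intro ℓ _
      simp only [hφdef, hdef0, ne_eq, Prod.ext_iff, Fin.ext_iff]
    rw [hfeq]
    exact hks
  have h1 : S.ncard ≤ A.card := by
    have he : S.ncard = (φ '' S).ncard := (Set.ncard_image_of_injective S hφ).symm
    rw [he, ← Set.ncard_coe_finset A]
    exact Set.ncard_le_ncard him (Finset.finite_toSet A)
  have h2 := count_aux d (m * 2 ^ m - 1) (Fin (2 ^ m) × Fin (2 ^ m)) def0
  rw [Fintype.card_prod, Fintype.card_fin] at h2
  have h3 := real_bound m d hm hd
  have hcard : (S.ncard : ℝ)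
      ≤ ((∑ j ∈ Finset.range (m * 2 ^ m - 1 + 1), d.choose j * (2 ^ m * 2 ^ m) ^ j : ℕ) : ℝ) := by
    exact_mod_cast le_trans h1 (le_trans (le_of_eq rfl) h2)
  exact le_trans hcard h3
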